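/- Define g_k : ℝ² → ℝ by g_k(x) = k·ReLU(⟨(k,0), x⟩) − k·ReLU(⟨(k, −1/k²), x⟩). For any sequence of two-layer bias-free ReLU network parametrizations Φ_k ∈ ℝ^{2×2} × ℝ^{1×2} with realizations equal to g_k, the norms ‖Φ_k‖_∞ tend to infinity: there is no uniform bound sup_k ‖Φ_k‖_∞ < ∞, even though ‖g_k‖_{L^∞((−1,1)²)} → 0. -/

import Mathlib

/-- Failure of inverse stability w.r.t. the uniform norm: any sequence of
parametrizations realizing `g_k` has parameters tending to infinity (no
uniform bound on the entries exists), even though `g_k → 0` uniformly. -/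
theorem stmt_5
    (A : ℕ → Fin 2 → Fin 2 → ℝ) (C : ℕ → Fin 2 → ℝ)
    (hreal : ∀ k : ℕ, 1 ≤ k → ∀ x : Fin 2 → ℝ,
      ∑ i, C k i * max (∑ j, A k i j * x j) 0 =
        (k : ℝ) * max ((k : ℝ) * x 0) 0 -
          (k : ℝ) * max ((k : ℝ) * x 0 - x 1 / (k : ℝ) ^ 2) 0) :
    ¬ ∃ M : ℝ, ∀ k : ℕ, 1 ≤ k →
        (∀ i j, |A k i j| ≤ M) ∧ (∀ i, |C k i| ≤ M) := by
  rintro ⟨M, hM⟩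
  set k : ℕ := 2 * ⌈|M|⌉₊ + 2 with hk
  have hk1 : 1 ≤ k := by omega
  have hkR : (2:ℝ) * |M| + 2 ≤ (k:ℝ) := by
    have h := Nat.le_ceil |M|
    have : ((2 * ⌈|M|⌉₊ + 2 : ℕ) : ℝ) = 2 * (⌈|M|⌉₊ : ℝ) + 2 := by push_cast; ring
    rw [hk, this]
    linarith
  have hMabs : (0:ℝ) ≤ |M| := abs_nonneg M
  have hkpos : (0:ℝ) < (k:ℝ) := by linarith
  have hkne : (k:ℝ) ≠ 0 := ne_of_gt hkpos
  obtain ⟨hA, hC⟩ := hM k hk1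
  have hM0 : (0:ℝ) ≤ M := le_trans (abs_nonneg _) (hA 0 0)
  have hx := hreal k hk1 ![(k:ℝ)⁻¹ ^ 3, 1]
  have hy := hreal k hk1 ![0, 1]
  simp only [Fin.sum_univ_two, Matrix.cons_val_zero, Matrix.cons_val_one, Matrix.head_cons,
    mul_one, mul_zero, zero_add, add_zero] at hx hy
  -- evaluate the RHS of hx
  have e1 : (k:ℝ) * ((k:ℝ)⁻¹ ^ 3) = ((k:ℝ) ^ 2)⁻¹ := by
    field_simp
  have e2 : ((k:ℝ) ^ 2)⁻¹ - 1 / (k:ℝ) ^ 2 = 0 := by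
    field_simp; ring
  rw [e1, e2] at hx
  have e3 : max (((k:ℝ) ^ 2)⁻¹) 0 = ((k:ℝ) ^ 2)⁻¹ := by
    apply max_eq_left; positivity
  rw [e3, max_self] at hx
  have hxval : C k 0 * max (A k 0 0 * (k:ℝ)⁻¹ ^ 3 + A k 0 1) 0 +
      C k 1 * max (A k 1 0 * (k:ℝ)⁻¹ ^ 3 + A k 1 1) 0 = (k:ℝ)⁻¹ := by
    rw [hx]; field_simp; ring
  -- evaluate the RHS of hy
  have hyval : C k 0 * max (A k 0 1) 0 + C k 1 * max (A k 1 1) 0 = 0 := by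
    rw [hy]
    have h6 : max ((0:ℝ) - 1 / (k:ℝ) ^ 2) 0 = 0 := by
      apply max_eq_right
      have : (0:ℝ) < 1 / (k:ℝ) ^ 2 := by positivity
      linarith
    rw [h6, max_self]; ring
  -- Lipschitz bound on the difference
  have key : ∀ i : Fin 2, |C k i * max (A k i 0 * (k:ℝ)⁻¹ ^ 3 + A k i 1) 0
      - C k i * max (A k i 1) 0| ≤ M * (M * (k:ℝ)⁻¹ ^ 3) := by
    intro i
    rw [← mul_sub, abs_mul]
    have h1 : |max (A k i 0 * (k:ℝ)⁻¹ ^ 3 + A k i 1) 0 - max (A k i 1) 0|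
        ≤ |A k i 0 * (k:ℝ)⁻¹ ^ 3| := by
      have := abs_max_sub_max_le_abs (A k i 0 * (k:ℝ)⁻¹ ^ 3 + A k i 1) (A k i 1) 0
      simpa using this
    have h2 : |A k i 0 * (k:ℝ)⁻¹ ^ 3| ≤ M * (k:ℝ)⁻¹ ^ 3 := by
      rw [abs_mul]
      have : |(k:ℝ)⁻¹ ^ 3| = (k:ℝ)⁻¹ ^ 3 := abs_of_nonneg (by positivity)
      rw [this]
      exact mul_le_mul_of_nonneg_right (hA i 0) (by positivity)
    exact mul_le_mul (hC i) (h1.trans h2) (abs_nonneg _) hM0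
  have key0 := key 0
  have key1 := key 1
  have hdiff : |(k:ℝ)⁻¹| ≤ 2 * (M * (M * (k:ℝ)⁻¹ ^ 3)) := by
    have : (k:ℝ)⁻¹ = (C k 0 * max (A k 0 0 * (k:ℝ)⁻¹ ^ 3 + A k 0 1) 0
        - C k 0 * max (A k 0 1) 0) + (C k 1 * max (A k 1 0 * (k:ℝ)⁻¹ ^ 3 + A k 1 1) 0
        - C k 1 * max (A k 1 1) 0) := by linarith
    conv_lhs => rw [this]
    have habs := abs_add_le (C k 0 * max (A k 0 0 * (k:ℝ)⁻¹ ^ 3 + A k 0 1) 0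
        - C k 0 * max (A k 0 1) 0) (C k 1 * max (A k 1 0 * (k:ℝ)⁻¹ ^ 3 + A k 1 1) 0
        - C k 1 * max (A k 1 1) 0)
    linarith
  have hinv : |(k:ℝ)⁻¹| = (k:ℝ)⁻¹ := abs_of_nonneg (by positivity)
  rw [hinv] at hdiff
  -- multiply through by k^3 : k^2 ≤ 2 M^2, contradiction with k ≥ 2|M| + 2
  have hk3 : (0:ℝ) < (k:ℝ) ^ 3 := by positivity
  have h7 : (k:ℝ) ^ 2 ≤ 2 * M ^ 2 := by
    have := mul_le_mul_of_nonneg_right hdiff (le_of_lt hk3)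
    have l1 : (k:ℝ)⁻¹ * (k:ℝ) ^ 3 = (k:ℝ) ^ 2 := by field_simp
    have l2 : 2 * (M * (M * (k:ℝ)⁻¹ ^ 3)) * (k:ℝ) ^ 3 = 2 * M ^ 2 := by
      field_simp
    rw [l1, l2] at this
    exact this
  have hMM : M ^ 2 = |M| ^ 2 := (sq_abs M).symm
  nlinarith [sq_nonneg ((k:ℝ) - 2 * |M|), sq_nonneg (|M|)]
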